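/- Let α ≥ 0, β > -1, α < β + 1 and γ = β + 1 - α. Define f(y) = ∫_y^1 t^γ/√(1 - t^{2γ}) dt for y ∈ (0,1). Then 2 ∫_0^1 y^α √(1 + f'(y)²) dy = 2 ∫_0^1 y^α / √(1 - y^{2γ}) dy = (1/γ) · B((α+1)/(2γ), 1/2), where B is the Beta function. -/

import Mathlib

open MeasureTheory Set intervalIntegral

/-- The real Beta function. -/
noncomputable def betaFn (a b : ℝ) : ℝ := ∫ t in (0:ℝ)..1, t^(a-1) * (1-t)^(b-1)

namespace Stmt6Aux

/-- integrability of the Beta integrand with second parameter 1/2 -/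
lemma beta_integrable {a : ℝ} (ha : 0 < a) :
    IntegrableOn (fun t : ℝ => t ^ (a-1) * (1-t) ^ (-(1/2) : ℝ)) (Ioo (0:ℝ) 1) := by
  have h1 : IntegrableOn (fun t : ℝ => t ^ (a-1) * (1-t) ^ (-(1/2) : ℝ)) (Ioc (0:ℝ) (1/2)) := by
    have hint : IntegrableOn (fun t : ℝ => ((1/2:ℝ) ^ (-(1/2):ℝ)) * t ^ (a-1)) (Ioc (0:ℝ) (1/2)) := by
      have := (intervalIntegrable_rpow' (a := (0:ℝ)) (b := 1/2) (r := a-1) (by linarith)).const_mul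
        ((1/2:ℝ) ^ (-(1/2):ℝ))
      rwa [intervalIntegrable_iff, uIoc_of_le (by norm_num : (0:ℝ) ≤ 1/2)] at this
    refine hint.mono' ?_ ?_
    · apply ContinuousOn.aestronglyMeasurable ?_ measurableSet_Ioc
      apply ContinuousOn.mul
      · exact ContinuousOn.rpow_const continuousOn_id (fun x hx => Or.inl (ne_of_gt hx.1))
      · exact ContinuousOn.rpow_const (continuousOn_const.sub continuousOn_id)
          (fun x hx => Or.inl (ne_of_gt (by simpa using by linarith [hx.2] : (0:ℝ) < 1 - x)))
    · filter_upwards [ae_restrict_mem measurableSet_Ioc] with t ht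
      have h0 : (0:ℝ) < t := ht.1
      have h2 : (1:ℝ)/2 ≤ 1 - t := by linarith [ht.2]
      rw [Real.norm_eq_abs, abs_mul, abs_of_nonneg (Real.rpow_nonneg h0.le _),
        abs_of_nonneg (Real.rpow_nonneg (by linarith : (0:ℝ) ≤ 1 - t) _),
        mul_comm ((1/2:ℝ) ^ (-(1/2):ℝ))]
      exact mul_le_mul_of_nonneg_left
        (Real.rpow_le_rpow_of_nonpos (by norm_num) h2 (by norm_num))
        (Real.rpow_nonneg h0.le _)
  have h2 : IntegrableOn (fun t : ℝ => t ^ (a-1) * (1-t) ^ (-(1/2) : ℝ)) (Ioo (1/2:ℝ) 1) := by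
    have hint : IntegrableOn (fun t : ℝ => ((1/2:ℝ) ^ (a-1) + 1) * (1-t) ^ (-(1/2):ℝ))
        (Ioo (1/2:ℝ) 1) := by
      have hi0 : IntervalIntegrable (fun x : ℝ => x ^ (-(1/2):ℝ)) volume 0 (1/2) :=
        intervalIntegrable_rpow' (by norm_num)
      have h := ((hi0.comp_sub_left 1).symm).const_mul ((1/2:ℝ) ^ (a-1) + 1)
      have h' : IntervalIntegrable (fun t : ℝ => ((1/2:ℝ) ^ (a-1) + 1) * (1-t) ^ (-(1/2):ℝ))
          volume (1/2) 1 := by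
        have e1 : (1:ℝ) - 1/2 = 1/2 := by norm_num
        have e2 : (1:ℝ) - 0 = 1 := by norm_num
        rwa [e1, e2] at h
      rw [intervalIntegrable_iff, uIoc_of_le (by norm_num : (1/2:ℝ) ≤ 1)] at h'
      exact (integrableOn_Ioc_iff_integrableOn_Ioo).mp h' 
    refine hint.mono' ?_ ?_
    · apply ContinuousOn.aestronglyMeasurable ?_ measurableSet_Ioo
      apply ContinuousOn.mul
      · exact ContinuousOn.rpow_const continuousOn_id
          (fun x hx => Or.inl (ne_of_gt (by linarith [hx.1] : (0:ℝ) < x)))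
      · exact ContinuousOn.rpow_const (continuousOn_const.sub continuousOn_id)
          (fun x hx => Or.inl (ne_of_gt (by simpa using by linarith [hx.2] : (0:ℝ) < 1 - x)))
    · filter_upwards [ae_restrict_mem measurableSet_Ioo] with t ht
      have h0 : (0:ℝ) < t := by linarith [ht.1]
      have hu : (0:ℝ) < 1 - t := by linarith [ht.2]
      have h12 : (0:ℝ) ≤ (1/2:ℝ) ^ (a-1) := Real.rpow_nonneg (by norm_num) _
      have hta : t ^ (a-1) ≤ (1/2:ℝ) ^ (a-1) + 1 := by
        rcases le_or_gt 0 (a-1) with h | h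
        · have h1 : t ^ (a-1) ≤ 1 ^ (a-1) := Real.rpow_le_rpow h0.le ht.2.le h
          rw [Real.one_rpow] at h1
          linarith
        · have h1 : t ^ (a-1) ≤ (1/2:ℝ) ^ (a-1) :=
            Real.rpow_le_rpow_of_nonpos (by norm_num) ht.1.le h.le
          linarith
      rw [Real.norm_eq_abs, abs_mul, abs_of_nonneg (Real.rpow_nonneg h0.le _),
        abs_of_nonneg (Real.rpow_nonneg hu.le _)]
      exact mul_le_mul_of_nonneg_right hta (Real.rpow_nonneg hu.le _)
  have hsub : Ioo (0:ℝ) 1 ⊆ Ioc (0:ℝ) (1/2) ∪ Ioo (1/2:ℝ) 1 := by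
    intro t ht
    rcases le_or_gt t (1/2) with h | h
    · exact Or.inl ⟨ht.1, h⟩
    · exact Or.inr ⟨h, ht.2⟩
  exact (h1.union h2).mono_set hsub

/-- change of variables t = y^(2γ) -/
lemma key (γ a e : ℝ) (hγ : 0 < γ) (h2a : 2*γ*a = e+1) :
    ((∫ t in Ioo (0:ℝ) 1, t^(a-1) * (1-t)^(-(1/2):ℝ))
       = ∫ y in Ioo (0:ℝ) 1, (2*γ) * (y^e * (1-y^(2*γ))^(-(1/2):ℝ))) ∧
    (IntegrableOn (fun t : ℝ => t^(a-1)*(1-t)^(-(1/2):ℝ)) (Ioo (0:ℝ) 1) ↔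
     IntegrableOn (fun y : ℝ => (2*γ) * (y^e * (1-y^(2*γ))^(-(1/2):ℝ))) (Ioo (0:ℝ) 1)) := by
  set φ : ℝ → ℝ := fun y => y ^ (2*γ) with hφ
  set φ' : ℝ → ℝ := fun y => 2*γ * y ^ (2*γ - 1) with hφ'
  have h2γ : 0 < 2*γ := by linarith
  have hd : ∀ x ∈ Ioo (0:ℝ) 1, HasDerivWithinAt φ (φ' x) (Ioo (0:ℝ) 1) x := fun x hx =>
    (Real.hasDerivAt_rpow_const (Or.inl (ne_of_gt hx.1))).hasDerivWithinAt
  have hinj : InjOn φ (Ioo (0:ℝ) 1) := by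
    intro x hx y hy hxy
    by_contra hne
    rcases lt_or_gt_of_ne hne with h | h
    · exact absurd hxy (ne_of_lt (Real.rpow_lt_rpow hx.1.le h h2γ))
    · exact absurd hxy (ne_of_gt (Real.rpow_lt_rpow hy.1.le h h2γ))
  have himg : φ '' Ioo (0:ℝ) 1 = Ioo (0:ℝ) 1 := by
    ext t
    constructor
    · rintro ⟨y, hy, rfl⟩
      exact ⟨Real.rpow_pos_of_pos hy.1 _, Real.rpow_lt_one hy.1.le hy.2 h2γ⟩
    · intro ht
      refine ⟨t ^ (1/(2*γ)), ⟨Real.rpow_pos_of_pos ht.1 _,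
        Real.rpow_lt_one ht.1.le ht.2 (by positivity)⟩, ?_⟩
      show (t ^ (1/(2*γ))) ^ (2*γ) = t
      rw [← Real.rpow_mul ht.1.le, one_div, inv_mul_cancel₀ (ne_of_gt h2γ), Real.rpow_one]
  have hcong : ∀ x ∈ Ioo (0:ℝ) 1,
      |φ' x| • ((φ x)^(a-1) * (1-φ x)^(-(1/2):ℝ))
        = (2*γ) * (x^e * (1-x^(2*γ))^(-(1/2):ℝ)) := by
    intro x hx
    have hx0 : (0:ℝ) < x := hx.1
    have hφ'pos : 0 < φ' x := by
      have := Real.rpow_pos_of_pos hx0 (2*γ - 1)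
      positivity
    simp only [hφ, hφ', smul_eq_mul]
    rw [abs_of_pos (by simpa [hφ'] using hφ'pos)]
    have hexp : (x ^ (2*γ)) ^ (a-1) = x ^ (2*γ*(a-1)) := by
      rw [← Real.rpow_mul hx0.le]
    rw [hexp]
    have : x ^ (2*γ - 1) * x ^ (2*γ*(a-1)) = x ^ e := by
      rw [← Real.rpow_add hx0]
      congr 1
      linear_combination h2a
    calc 2*γ * x ^ (2*γ-1) * (x ^ (2*γ*(a-1)) * (1 - x^(2*γ))^(-(1/2):ℝ))
        = 2*γ * ((x ^ (2*γ-1) * x ^ (2*γ*(a-1))) * (1 - x^(2*γ))^(-(1/2):ℝ)) := by ring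
      _ = (2*γ) * (x^e * (1-x^(2*γ))^(-(1/2):ℝ)) := by rw [this]
  constructor
  · calc (∫ t in Ioo (0:ℝ) 1, t^(a-1) * (1-t)^(-(1/2):ℝ))
        = ∫ t in φ '' Ioo (0:ℝ) 1, t^(a-1) * (1-t)^(-(1/2):ℝ) := by rw [himg]
      _ = ∫ x in Ioo (0:ℝ) 1, |φ' x| • ((φ x)^(a-1) * (1-φ x)^(-(1/2):ℝ)) :=
          integral_image_eq_integral_abs_deriv_smul measurableSet_Ioo hd hinj _
      _ = ∫ y in Ioo (0:ℝ) 1, (2*γ) * (y^e * (1-y^(2*γ))^(-(1/2):ℝ)) :=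
          setIntegral_congr_fun measurableSet_Ioo hcong
  · have hiff := integrableOn_image_iff_integrableOn_abs_deriv_smul measurableSet_Ioo hd hinj
      (fun t : ℝ => t^(a-1)*(1-t)^(-(1/2):ℝ))
    rw [himg] at hiff
    exact hiff.trans (integrableOn_congr_fun hcong measurableSet_Ioo)

end Stmt6Aux

open Stmt6Aux in
theorem stmt6 (α β γ : ℝ) (hα : 0 ≤ α) (hβ : -1 < β) (hαβ : α < β + 1)
    (hγ : γ = β + 1 - α)
    (f : ℝ → ℝ) (hf : ∀ y, f y = ∫ t in y..(1:ℝ), t^γ / Real.sqrt (1 - t^(2*γ))) :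
    2 * (∫ y in (0:ℝ)..1, y^α * Real.sqrt (1 + (deriv f y)^2))
      = 2 * (∫ y in (0:ℝ)..1, y^α / Real.sqrt (1 - y^(2*γ))) ∧
    2 * (∫ y in (0:ℝ)..1, y^α / Real.sqrt (1 - y^(2*γ)))
      = (1/γ) * betaFn ((α+1)/(2*γ)) (1/2) := by
  have hγ0 : 0 < γ := by rw [hγ]; linarith
  have h2γ : 0 < 2*γ := by linarith
  set g : ℝ → ℝ := fun t => t^γ / Real.sqrt (1 - t^(2*γ)) with hg
  have hfg : f = fun y => ∫ t in y..(1:ℝ), g t := funext hf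
  -- basic facts on Ioo 0 1
  have hu : ∀ y ∈ Ioo (0:ℝ) 1, 0 < 1 - y^(2*γ) := fun y hy => by
    have := Real.rpow_lt_one hy.1.le hy.2 h2γ; linarith
  -- continuity of g on Ioo 0 1
  have hgc : ContinuousOn g (Ioo (0:ℝ) 1) := by
    apply ContinuousOn.div
    · exact ContinuousOn.rpow_const continuousOn_id (fun x hx => Or.inl (ne_of_gt hx.1))
    · exact ContinuousOn.sqrt (continuousOn_const.sub
        (ContinuousOn.rpow_const continuousOn_id (fun x hx => Or.inl (ne_of_gt hx.1))))
    · intro x hx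
      exact ne_of_gt (Real.sqrt_pos.mpr (hu x hx))
  -- integrability of g on Ioo 0 1, via change of variables from the Beta integrand
  have hgint : IntegrableOn g (Ioo (0:ℝ) 1) := by
    have ha : (0:ℝ) < (γ+1)/(2*γ) := by positivity
    have hkey := (key γ ((γ+1)/(2*γ)) γ hγ0 (by field_simp)).2
    have hbeta := beta_integrable ha
    have h2 : IntegrableOn (fun y : ℝ => (2*γ) * (y^γ * (1-y^(2*γ))^(-(1/2):ℝ)))
        (Ioo (0:ℝ) 1) := hkey.mp hbeta
    have h3 := h2.const_mul ((2*γ)⁻¹)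
    refine IntegrableOn.congr_fun h3 ?_ measurableSet_Ioo
    intro y hy
    have huy := hu y hy
    show (2*γ)⁻¹ * ((2*γ) * (y^γ * (1-y^(2*γ))^(-(1/2):ℝ))) = y^γ / Real.sqrt (1-y^(2*γ))
    rw [inv_mul_cancel_left₀ (ne_of_gt h2γ),
      Real.rpow_neg huy.le, ← Real.sqrt_eq_rpow, ← div_eq_mul_inv]
  -- derivative of f on Ioo 0 1
  have hderiv : ∀ y ∈ Ioo (0:ℝ) 1, deriv f y = -g y := by
    intro y hy
    have hint : IntervalIntegrable g volume y 1 := by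
      rw [intervalIntegrable_iff, uIoc_of_le hy.2.le]
      rw [integrableOn_Ioc_iff_integrableOn_Ioo]
      exact hgint.mono_set (fun t ht => ⟨lt_trans hy.1 ht.1, ht.2⟩)
    have hmeas : StronglyMeasurableAtFilter g (nhds y) volume :=
      (hgc.stronglyMeasurableAtFilter isOpen_Ioo) y hy
    have hca : ContinuousAt g y := hgc.continuousAt (isOpen_Ioo.mem_nhds hy)
    rw [hfg]
    exact (intervalIntegral.integral_hasDerivAt_left hint hmeas hca).deriv
  constructor
  · -- first equality
    congr 1
    rw [integral_of_le zero_le_one, integral_of_le zero_le_one,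
      integral_Ioc_eq_integral_Ioo, integral_Ioc_eq_integral_Ioo]
    apply setIntegral_congr_fun measurableSet_Ioo
    intro y hy
    show y ^ α * Real.sqrt (1 + deriv f y ^ 2) = y ^ α / Real.sqrt (1 - y^(2*γ))
    have huy := hu y hy
    have hgy : g y = y^γ / Real.sqrt (1 - y^(2*γ)) := rfl
    rw [hderiv y hy, hgy]
    rw [neg_sq, div_pow, Real.sq_sqrt huy.le]
    have hy2 : (y^γ)^2 = y^(2*γ) := by
      rw [two_mul, Real.rpow_add hy.1, sq]
    rw [hy2]
    have h1u : 1 + y^(2*γ) / (1 - y^(2*γ)) = (1 - y^(2*γ))⁻¹ := by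
      field_simp
      ring
    rw [h1u, Real.sqrt_inv, div_eq_mul_inv]
  · -- second equality
    have ha : (0:ℝ) < (α+1)/(2*γ) := by positivity
    have hkey := (key γ ((α+1)/(2*γ)) α hγ0 (by field_simp)).1
    have hbeta : betaFn ((α+1)/(2*γ)) (1/2)
        = ∫ t in Ioo (0:ℝ) 1, t^((α+1)/(2*γ)-1) * (1-t)^(-(1/2):ℝ) := by
      rw [betaFn, integral_of_le zero_le_one, integral_Ioc_eq_integral_Ioo]
      apply setIntegral_congr_fun measurableSet_Ioo
      intro t ht
      norm_num
    rw [hbeta, hkey]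
    rw [integral_of_le zero_le_one, integral_Ioc_eq_integral_Ioo]
    have hc : (∫ y in Ioo (0:ℝ) 1, y^α / Real.sqrt (1 - y^(2*γ)))
        = ∫ y in Ioo (0:ℝ) 1, y^α * (1-y^(2*γ))^(-(1/2):ℝ) := by
      apply setIntegral_congr_fun measurableSet_Ioo
      intro y hy
      have huy := hu y hy
      show y^α / Real.sqrt (1-y^(2*γ)) = y^α * (1-y^(2*γ))^(-(1/2):ℝ)
      rw [Real.rpow_neg huy.le, ← Real.sqrt_eq_rpow, ← div_eq_mul_inv]
    rw [hc, MeasureTheory.integral_const_mul]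
    field_simp
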